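/- Let E be a directed graph with finitely many vertices in which every transition state (vertex not belonging to any component of Γ_E) has exactly one outgoing edge. Then the union of two saturated hereditary subsets of E⁰ is again saturated, and the collection of sets closure(H(γ)) \ closure(H(γ)\γ), as γ ranges over the components Γ_E, is a partition of E⁰. -/
import Mathlib


/-- The one-step edge relation of a directed graph. -/
def gStep {V E : Type} (s r : E → V) : V → V → Prop :=
  fun x y => ∃ e : E, s e = x ∧ r e = y

/-- `u ≥ v`: there is a (possibly empty) path from `u` to `v`. -/
def gReach {V E : Type} (s r : E → V) : V → V → Prop :=
  Relation.ReflTransGen (gStep s r)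

/-- A hereditary subset of vertices: closed under `≥`-successors. -/
def gHereditary {V E : Type} (s r : E → V) (H : Set V) : Prop :=
  ∀ u ∈ H, ∀ v : V, gReach s r u v → v ∈ H

/-- A regular vertex: it emits finitely many and at least one edge. -/
def gRegular {V E : Type} (s r : E → V) (v : V) : Prop :=
  {e : E | s e = v}.Finite ∧ {e : E | s e = v}.Nonempty

/-- A saturated subset of vertices: every regular vertex all of whose outgoing
edges end in `H` belongs to `H`. -/
def gSaturated {V E : Type} (s r : E → V) (H : Set V) : Prop :=
  ∀ v : V, gRegular s r v → (∀ e : E, s e = v → r e ∈ H) → v ∈ H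

/-- The hereditary subset `H(S)` generated by `S`. -/
def gHer {V E : Type} (s r : E → V) (S : Set V) : Set V :=
  {v : V | ∃ u ∈ S, gReach s r u v}

/-- The saturation of a set: the smallest saturated set containing it. -/
def gSat {V E : Type} (s r : E → V) (S : Set V) : Set V :=
  ⋂₀ {H : Set V | gSaturated s r H ∧ S ⊆ H}

/-- A strongly connected set: nonempty, and any two of its vertices are joined
by a nonempty path. -/
def gStronglyConnectedSet {V E : Type} (s r : E → V) (S : Set V) : Prop :=
  S.Nonempty ∧ ∀ u ∈ S, ∀ v ∈ S, Relation.TransGen (gStep s r) u v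

/-- A maximal strongly connected set. -/
def gMaxSCC {V E : Type} (s r : E → V) (S : Set V) : Prop :=
  gStronglyConnectedSet s r S ∧
    ∀ T : Set V, gStronglyConnectedSet s r T → S ⊆ T → S = T

/-- The components `Γ_E`: all maximal strongly connected sets together with the
singletons of singular vertices not based on a cycle. -/
def gGamma {V E : Type} (s r : E → V) : Set (Set V) :=
  {S | gMaxSCC s r S} ∪
    {S | ∃ v : V, S = {v} ∧ ¬ gRegular s r v ∧ ¬ Relation.TransGen (gStep s r) v v}

/-- The order on components: `γ₁ ≥ γ₂` iff some vertex of `γ₁` reaches some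
vertex of `γ₂`. -/
def gGammaGE {V E : Type} (s r : E → V) (γ₁ γ₂ : Set V) : Prop :=
  ∃ v₁ ∈ γ₁, ∃ v₂ ∈ γ₂, gReach s r v₁ v₂

/-- A hereditary subset of the component poset `Γ_E`. -/
def gGammaHereditary {V E : Type} (s r : E → V) (σ : Set (Set V)) : Prop :=
  ∀ γ₁ ∈ σ, ∀ γ₂ ∈ gGamma s r, gGammaGE s r γ₁ γ₂ → γ₂ ∈ σ

/-- The map `η ↦ saturation of H(∪η)` from subsets of `Γ_E` to subsets of
`E⁰`. -/
def gPhi {V E : Type} (s r : E → V) (σ : Set (Set V)) : Set V :=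
  gSat s r (gHer s r (⋃₀ σ))

/-- A transition state: a vertex belonging to no component of `Γ_E`. -/
def gTransitionState {V E : Type} (s r : E → V) (v : V) : Prop :=
  ∀ γ ∈ gGamma s r, v ∉ γ
namespace StmtAux

variable {V E : Type} {s r : E → V}

/-- `gHer` always produces a hereditary set. -/
lemma her_hereditary (S : Set V) : gHereditary s r (gHer s r S) := by
  rintro u ⟨a, ha, hau⟩ v huv
  exact ⟨a, ha, hau.trans huv⟩

lemma sat_saturated (S : Set V) : gSaturated s r (gSat s r S) := by
  intro v hreg hall
  intro K hK
  exact hK.1 v hreg (fun e he => hall e he K hK)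

lemma subset_sat (S : Set V) : S ⊆ gSat s r S :=
  fun v hv K hK => hK.2 hv

lemma sat_le {S K : Set V} (hK : gSaturated s r K) (hSK : S ⊆ K) :
    gSat s r S ⊆ K :=
  fun v hv => hv K ⟨hK, hSK⟩

/-- Saturation of a hereditary set is hereditary. -/
lemma sat_hereditary {H : Set V} (hH : gHereditary s r H) :
    gHereditary s r (gSat s r H) := by
  set H' : Set V := {v | v ∈ gSat s r H ∧ ∀ w, gReach s r v w → w ∈ gSat s r H}
    with hH'def
  have hsub : gSat s r H ⊆ H' := by
    apply sat_le
    · intro v hreg hall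
      refine ⟨sat_saturated H v hreg (fun e he => (hall e he).1), ?_⟩
      intro w hw
      rcases hw.cases_head with heq | ⟨c, ⟨e, hse, hre⟩, hcw⟩
      · exact heq ▸ sat_saturated H v hreg (fun e he => (hall e he).1)
      · exact (hall e hse).2 w (hre ▸ hcw)
    · intro v hv
      exact ⟨subset_sat H hv, fun w hw => subset_sat H (hH v hv w hw)⟩
  intro u hu v huv
  exact (hsub hu).2 v huv

/-- If `v` has exactly one outgoing edge, landing in a saturated set `K`,
then `v ∈ K`. -/
lemma unique_edge_sat {K : Set V} (hK : gSaturated s r K) {v : V} {e₀ : E}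
    (hse : s e₀ = v) (huniq : ∀ e : E, s e = v → e = e₀) (hre : r e₀ ∈ K) :
    v ∈ K := by
  refine hK v ⟨?_, ⟨e₀, hse⟩⟩ ?_
  · exact Set.Finite.subset (Set.finite_singleton e₀) (fun e he => huniq e he)
  · intro e he
    rw [huniq e he]
    exact hre

/-- Extension principle for maximal SCCs. -/
lemma maxSCC_extend {γ : Set V} (hγ : gMaxSCC s r γ) {u : V}
    (hu1 : ∀ b ∈ γ, Relation.TransGen (gStep s r) u b)
    (hu2 : ∀ b ∈ γ, Relation.TransGen (gStep s r) b u)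
    (hu3 : Relation.TransGen (gStep s r) u u) : u ∈ γ := by
  have hSC : gStronglyConnectedSet s r (γ ∪ {u}) := by
    refine ⟨hγ.1.1.mono Set.subset_union_left, ?_⟩
    rintro a (ha | ha) b (hb | hb)
    · exact hγ.1.2 a ha b hb
    · rw [Set.mem_singleton_iff] at hb
      exact hb ▸ hu2 a ha
    · rw [Set.mem_singleton_iff] at ha; exact ha ▸ hu1 b hb
    · rw [Set.mem_singleton_iff] at ha hb; exact ha ▸ hb ▸ hu3
  have heq := hγ.2 _ hSC Set.subset_union_left
  have : u ∈ γ ∪ {u} := Or.inr rfl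
  rwa [← heq] at this

/-- Every vertex of a maximal SCC has an outgoing edge whose range lies in the
SCC and reaches back. -/
lemma maxSCC_succ {γ : Set V} (hγ : gMaxSCC s r γ) {v : V} (hv : v ∈ γ) :
    ∃ e : E, s e = v ∧ gReach s r (r e) v ∧ r e ∈ γ := by
  obtain ⟨x, hstep, hxv⟩ := Relation.TransGen.head'_iff.mp (hγ.1.2 v hv v hv)
  obtain ⟨e, hse, hre⟩ := hstep
  have hstep' : gStep s r v x := ⟨e, hse, hre⟩
  have hxγ : x ∈ γ := by
    refine maxSCC_extend hγ (fun b hb => ?_) (fun b hb => ?_) ?_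
    · exact Relation.TransGen.trans_right hxv (hγ.1.2 v hv b hb)
    · exact (hγ.1.2 b hb v hv).tail hstep'
    · exact Relation.TransGen.trans_right hxv (Relation.TransGen.single hstep')
  exact ⟨e, hse, hre ▸ hxv, hre ▸ hxγ⟩

/-- If `v` lies on a cycle then `v` belongs to some component. -/
lemma cycle_mem_gamma {v : V} (hv : Relation.TransGen (gStep s r) v v) :
    ∃ γ ∈ gGamma s r, v ∈ γ := by
  set C : Set V := {u | gReach s r v u ∧ gReach s r u v} with hC
  have hvC : v ∈ C := ⟨Relation.ReflTransGen.refl, Relation.ReflTransGen.refl⟩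
  have hSC : gStronglyConnectedSet s r C := by
    refine ⟨⟨v, hvC⟩, ?_⟩
    rintro a ⟨hva, hav⟩ b ⟨hvb, hbv⟩
    exact (Relation.TransGen.trans_right hav hv).trans_left hvb
  refine ⟨C, Or.inl ⟨hSC, ?_⟩, hvC⟩
  intro T hT hCT
  refine Set.Subset.antisymm hCT (fun t ht => ?_)
  exact ⟨(hT.2 v (hCT hvC) t ht).to_reflTransGen,
    (hT.2 t ht v (hCT hvC)).to_reflTransGen⟩

/-- The complement of a component is saturated. -/
lemma compl_saturated {γ : Set V} (hγ : γ ∈ gGamma s r) :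
    gSaturated s r γᶜ := by
  intro v hreg hall
  intro hv
  rcases hγ with hγ | ⟨x, hx, hxreg, _⟩
  · obtain ⟨e, hse, _, hreγ⟩ := maxSCC_succ hγ hv
    exact hall e hse hreγ
  · rw [hx, Set.mem_singleton_iff] at hv
    exact hxreg (hv ▸ hreg)

/-- Distinct components are disjoint. -/
lemma gamma_disjoint {γ₁ γ₂ : Set V} (h₁ : γ₁ ∈ gGamma s r)
    (h₂ : γ₂ ∈ gGamma s r) {v : V} (hv₁ : v ∈ γ₁) (hv₂ : v ∈ γ₂) :
    γ₁ = γ₂ := by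
  rcases h₁ with h₁ | ⟨x₁, hx₁, _, hc₁⟩
  · rcases h₂ with h₂ | ⟨x₂, hx₂, _, hc₂⟩
    · have hSC : gStronglyConnectedSet s r (γ₁ ∪ γ₂) := by
        refine ⟨h₁.1.1.mono Set.subset_union_left, ?_⟩
        rintro a (ha | ha) b (hb | hb)
        · exact h₁.1.2 a ha b hb
        · exact (h₁.1.2 a ha v hv₁).trans_left (h₂.1.2 v hv₂ b hb).to_reflTransGen
        · exact (h₂.1.2 a ha v hv₂).trans_left (h₁.1.2 v hv₁ b hb).to_reflTransGen
        · exact h₂.1.2 a ha b hb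
      exact (h₁.2 _ hSC Set.subset_union_left).trans (h₂.2 _ hSC Set.subset_union_right).symm
    · rw [hx₂, Set.mem_singleton_iff] at hv₂
      exact absurd (hv₂ ▸ h₁.1.2 v hv₁ v hv₁) (hv₂ ▸ hc₂)
  · rw [hx₁, Set.mem_singleton_iff] at hv₁
    rcases h₂ with h₂ | ⟨x₂, hx₂, _, hc₂⟩
    · exact absurd (hv₁ ▸ h₂.1.2 v hv₂ v hv₂) (hv₁ ▸ hc₁)
    · rw [hx₂, Set.mem_singleton_iff] at hv₂
      rw [hx₁, hx₂, ← hv₁, ← hv₂]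

/-- `H(γ) \ γ` is hereditary for a component `γ`. -/
lemma her_diff_hereditary {γ : Set V} (hγ : γ ∈ gGamma s r) :
    gHereditary s r (gHer s r γ \ γ) := by
  rintro u ⟨⟨a, haγ, hau⟩, huγ⟩ w huw
  refine ⟨⟨a, haγ, hau.trans huw⟩, ?_⟩
  intro hwγ
  rcases hγ with hγ | ⟨x, hx, _, hc⟩
  · -- maximal SCC: u would belong to γ
    have hua : Relation.TransGen (gStep s r) u a :=
      Relation.TransGen.trans_right huw (hγ.1.2 w hwγ a haγ)
    refine huγ (maxSCC_extend hγ (fun b hb => ?_) (fun b hb => ?_) ?_)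
    · exact hua.trans_left (hγ.1.2 a haγ b hb).to_reflTransGen
    · exact (hγ.1.2 b hb a haγ).trans_left hau
    · exact hua.trans_left hau
  · rw [hx, Set.mem_singleton_iff] at haγ hwγ
    subst haγ
    subst hwγ
    -- a →* u, u →* a, u ≠ a gives a cycle at a
    rcases hau.cases_head with heq | ⟨c, hac, hcu⟩
    · exact huγ (hx ▸ heq ▸ rfl)
    · exact hc (Relation.TransGen.head' hac (hcu.trans huw))

/-- A component vertex lies in the saturation of a hereditary set only if it
lies in the set itself. -/
lemma sat_comp {H : Set V} (hH : gHereditary s r H) {γ₀ : Set V}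
    (hγ₀ : γ₀ ∈ gGamma s r) {v : V} (hv : v ∈ γ₀) (hvH : v ∉ H) :
    v ∉ gSat s r H := by
  have hdisj : H ⊆ γ₀ᶜ := by
    intro u hu hu0
    rcases hγ₀ with hγ | ⟨x, hx, _, _⟩
    · exact hvH (hH u hu v (hγ.1.2 u hu0 v hv).to_reflTransGen)
    · rw [hx, Set.mem_singleton_iff] at hu0 hv
      exact hvH ((hu0.trans hv.symm) ▸ hu)
  intro hsat
  exact sat_le (compl_saturated hγ₀) hdisj hsat hv

/-- Existence and uniqueness of the component for a vertex belonging to some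
component. -/
lemma comp_case {γ₀ : Set V} (hγ₀ : γ₀ ∈ gGamma s r) {v : V} (hv : v ∈ γ₀) :
    ∃! γ : Set V, γ ∈ gGamma s r ∧
      v ∈ gSat s r (gHer s r γ) \ gSat s r (gHer s r γ \ γ) := by
  refine ⟨γ₀, ⟨hγ₀, ?_, ?_⟩, ?_⟩
  · exact subset_sat _ ⟨v, hv, Relation.ReflTransGen.refl⟩
  · intro hsat
    exact sat_le (compl_saturated hγ₀) (fun u hu => hu.2) hsat hv
  · rintro γ ⟨hγ, hmem, hnmem⟩
    by_cases hvH : v ∈ gHer s r γ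
    · by_cases hvγ : v ∈ γ
      · exact gamma_disjoint hγ hγ₀ hvγ hv
      · exact absurd (subset_sat (gHer s r γ \ γ) (⟨hvH, hvγ⟩ : v ∈ gHer s r γ \ γ)) hnmem
    · exact absurd hmem (sat_comp (her_hereditary γ) hγ₀ hv hvH)

/-- Transfer of the defining property along the unique edge out of a
transition state. -/
lemma trans_transfer {v : V} {e₀ : E} (hse : s e₀ = v)
    (huniq : ∀ e : E, s e = v → e = e₀) (γ : Set V) :
    (γ ∈ gGamma s r ∧
        v ∈ gSat s r (gHer s r γ) \ gSat s r (gHer s r γ \ γ)) ↔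
    (γ ∈ gGamma s r ∧
        r e₀ ∈ gSat s r (gHer s r γ) \ gSat s r (gHer s r γ \ γ)) := by
  have hstep : gReach s r v (r e₀) :=
    Relation.ReflTransGen.single ⟨e₀, hse, rfl⟩
  constructor
  · rintro ⟨hγ, h1, h2⟩
    refine ⟨hγ, sat_hereditary (her_hereditary γ) v h1 _ hstep, ?_⟩
    intro hmem
    exact h2 (unique_edge_sat (sat_saturated _) hse huniq hmem)
  · rintro ⟨hγ, h1, h2⟩
    refine ⟨hγ, unique_edge_sat (sat_saturated _) hse huniq h1, ?_⟩
    intro hmem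
    exact h2 (sat_hereditary (her_diff_hereditary hγ) v hmem _ hstep)
end StmtAux


/-- Let `E` be a graph with finitely many vertices in which every transition
state has exactly one outgoing edge.  Then the union of two saturated
hereditary subsets is saturated, and the sets
`closure(H(γ)) \ closure(H(γ) \ γ)`, `γ ∈ Γ_E`, form a partition of `E⁰`. -/
theorem stmt_18 (V E : Type) [Fintype V] (s r : E → V)
    (hts : ∀ v : V, gTransitionState s r v → ∃! e : E, s e = v) :
    (∀ H₁ H₂ : Set V,
      gHereditary s r H₁ → gSaturated s r H₁ →
      gHereditary s r H₂ → gSaturated s r H₂ →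
      gSaturated s r (H₁ ∪ H₂)) ∧
    (∀ v : V, ∃! γ : Set V, γ ∈ gGamma s r ∧
      v ∈ gSat s r (gHer s r γ) \ gSat s r (gHer s r γ \ γ)) := by
  constructor
  · -- unions of saturated hereditary sets are saturated
    intro H₁ H₂ h1h h1s h2h h2s v hreg hall
    by_cases hv : gTransitionState s r v
    · obtain ⟨e₀, hse, huniq⟩ := hts v hv
      rcases hall e₀ hse with h | h
      · exact Or.inl (StmtAux.unique_edge_sat h1s hse huniq h)
      · exact Or.inr (StmtAux.unique_edge_sat h2s hse huniq h)
    · simp only [gTransitionState, not_forall] at hv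
      obtain ⟨γ, hγ, hvγ⟩ := hv
      rw [not_not] at hvγ
      rcases hγ with hγ | ⟨x, hx, hxreg, _⟩
      · obtain ⟨e, hse, hrv, _⟩ := StmtAux.maxSCC_succ hγ hvγ
        rcases hall e hse with h | h
        · exact Or.inl (h1h _ h v hrv)
        · exact Or.inr (h2h _ h v hrv)
      · rw [hx, Set.mem_singleton_iff] at hvγ
        exact absurd (hvγ ▸ hreg) hxreg
  · -- the partition statement
    have key : ∀ (n : ℕ) (v : V),
        {x | gReach s r v x ∧ gTransitionState s r x}.ncard ≤ n →
        ∃! γ : Set V, γ ∈ gGamma s r ∧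
          v ∈ gSat s r (gHer s r γ) \ gSat s r (gHer s r γ \ γ) := by
      intro n
      induction n with
      | zero =>
        intro v hle
        by_cases hv : gTransitionState s r v
        · exfalso
          have hpos : 0 < {x | gReach s r v x ∧ gTransitionState s r x}.ncard := by
            rw [Set.ncard_pos (Set.toFinite _)]
            exact ⟨v, Relation.ReflTransGen.refl, hv⟩
          omega
        · simp only [gTransitionState, not_forall] at hv
          obtain ⟨γ₀, hγ₀, hvγ₀⟩ := hv
          rw [not_not] at hvγ₀
          exact StmtAux.comp_case hγ₀ hvγ₀
      | succ n ih =>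
        intro v hle
        by_cases hv : gTransitionState s r v
        · obtain ⟨e₀, hse, huniq⟩ := hts v hv
          have hnr : ¬ gReach s r (r e₀) v := by
            intro hr
            obtain ⟨γ, hγ, hvγ⟩ :=
              StmtAux.cycle_mem_gamma (Relation.TransGen.head' ⟨e₀, hse, rfl⟩ hr)
            exact hv γ hγ hvγ
          have hssub : {x | gReach s r (r e₀) x ∧ gTransitionState s r x} ⊂
              {x | gReach s r v x ∧ gTransitionState s r x} := by
            constructor
            · rintro x ⟨hx1, hx2⟩
              exact ⟨Relation.ReflTransGen.head ⟨e₀, hse, rfl⟩ hx1, hx2⟩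
            · intro hsub
              exact hnr (hsub ⟨Relation.ReflTransGen.refl, hv⟩).1
          have hlt := Set.ncard_lt_ncard hssub (Set.toFinite _)
          exact (existsUnique_congr (StmtAux.trans_transfer hse huniq)).mpr
            (ih (r e₀) (by omega))
        · simp only [gTransitionState, not_forall] at hv
          obtain ⟨γ₀, hγ₀, hvγ₀⟩ := hv
          rw [not_not] at hvγ₀
          exact StmtAux.comp_case hγ₀ hvγ₀
    exact fun v => key _ v le_rfl
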